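/- Any set of at most 3 mutually orthogonal product vectors in a multipartite Hilbert space ⊗_{i=1}^m H_i can be completed to a full orthogonal product basis of the whole space. -/

import Mathlib

open Module

noncomputable section

private lemma extend_family {K k : ℕ} (hk : k ≤ K)
    (v : Fin k → EuclideanSpace ℂ (Fin K)) (hv : Orthonormal ℂ v) :
    ∃ B : OrthonormalBasis (Fin K) ℂ (EuclideanSpace ℂ (Fin K)),
      ∀ j : Fin k, B (Fin.castLE hk j) = v j := by
  classical
  set w : Fin K → EuclideanSpace ℂ (Fin K) :=
    fun i => if h : i.1 < k then v ⟨i.1, h⟩ else 0 with hw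
  set s : Set (Fin K) := {i | i.1 < k} with hs
  have hres : Orthonormal ℂ (s.restrict w) := by
    have := hv.comp (fun i : s => (⟨i.1.1, i.2⟩ : Fin k))
      (fun x y hxy => by
        apply Subtype.ext; apply Fin.ext
        simpa [Fin.ext_iff] using hxy)
    convert this using 1
    funext i
    simp only [Set.restrict_apply, hw, Function.comp]
    exact dif_pos i.2
  have hcard : finrank ℂ (EuclideanSpace ℂ (Fin K)) = Fintype.card (Fin K) := by simp
  obtain ⟨B, hB⟩ := hres.exists_orthonormalBasis_extension_of_card_eq hcard
  refine ⟨B, fun j => ?_⟩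
  have hj : (Fin.castLE hk j) ∈ s := j.2
  rw [hB _ hj]
  simp only [hw]
  have : ((Fin.castLE hk j : Fin K) : ℕ) < k := j.2
  rw [dif_pos this]
  rfl

private lemma on1 {K : ℕ} {x : EuclideanSpace ℂ (Fin K)} (hx : ‖x‖ = 1) :
    Orthonormal ℂ ![x] := by
  constructor
  · intro i; fin_cases i <;> simpa
  · intro i j hij; fin_cases i <;> fin_cases j <;> simp_all

private lemma on2 {K : ℕ} {x y : EuclideanSpace ℂ (Fin K)} (hx : ‖x‖ = 1) (hy : ‖y‖ = 1)
    (hxy : (inner ℂ x y : ℂ) = 0) : Orthonormal ℂ ![x, y] := by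
  have hyx : (inner ℂ y x : ℂ) = 0 := inner_eq_zero_symm.mp hxy
  constructor
  · intro i; fin_cases i <;> simpa
  · intro i j hij; fin_cases i <;> fin_cases j <;> simp_all

private lemma on3 {K : ℕ} {x y z : EuclideanSpace ℂ (Fin K)} (hx : ‖x‖ = 1) (hy : ‖y‖ = 1)
    (hz : ‖z‖ = 1) (hxy : (inner ℂ x y : ℂ) = 0) (hxz : (inner ℂ x z : ℂ) = 0)
    (hyz : (inner ℂ y z : ℂ) = 0) : Orthonormal ℂ ![x, y, z] := by
  have hyx : (inner ℂ y x : ℂ) = 0 := inner_eq_zero_symm.mp hxy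
  have hzx : (inner ℂ z x : ℂ) = 0 := inner_eq_zero_symm.mp hxz
  have hzy : (inner ℂ z y : ℂ) = 0 := inner_eq_zero_symm.mp hyz
  constructor
  · intro i; fin_cases i <;> simpa
  · intro i j hij; fin_cases i <;> fin_cases j <;> simp_all

private lemma card_le_of_on {K k : ℕ} {v : Fin k → EuclideanSpace ℂ (Fin K)}
    (hv : Orthonormal ℂ v) : k ≤ K := by
  have := hv.linearIndependent.fintype_card_le_finrank
  simpa using this

private lemma extend1 {K : ℕ} {x : EuclideanSpace ℂ (Fin K)} (hx : ‖x‖ = 1) :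
    ∃ B : OrthonormalBasis (Fin K) ℂ (EuclideanSpace ℂ (Fin K)),
      ∀ h0 : 0 < K, B ⟨0, h0⟩ = x := by
  have hv := on1 hx
  obtain ⟨B, hB⟩ := extend_family (card_le_of_on hv) _ hv
  exact ⟨B, fun h0 => hB 0⟩

private lemma extend2 {K : ℕ} {x y : EuclideanSpace ℂ (Fin K)} (hx : ‖x‖ = 1) (hy : ‖y‖ = 1)
    (hxy : (inner ℂ x y : ℂ) = 0) :
    ∃ (h2 : 2 ≤ K) (B : OrthonormalBasis (Fin K) ℂ (EuclideanSpace ℂ (Fin K))),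
      B ⟨0, by omega⟩ = x ∧ B ⟨1, by omega⟩ = y := by
  have hv := on2 hx hy hxy
  have h2 := card_le_of_on hv
  obtain ⟨B, hB⟩ := extend_family h2 _ hv
  exact ⟨h2, B, hB 0, hB 1⟩

private lemma extend3 {K : ℕ} {x y z : EuclideanSpace ℂ (Fin K)} (hx : ‖x‖ = 1) (hy : ‖y‖ = 1)
    (hz : ‖z‖ = 1) (hxy : (inner ℂ x y : ℂ) = 0) (hxz : (inner ℂ x z : ℂ) = 0)
    (hyz : (inner ℂ y z : ℂ) = 0) :
    ∃ (h3 : 3 ≤ K) (B : OrthonormalBasis (Fin K) ℂ (EuclideanSpace ℂ (Fin K))),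
      B ⟨0, by omega⟩ = x ∧ B ⟨1, by omega⟩ = y ∧ B ⟨2, by omega⟩ = z := by
  have hv := on3 hx hy hz hxy hxz hyz
  have h3 := card_le_of_on hv
  obtain ⟨B, hB⟩ := extend_family h3 _ hv
  exact ⟨h3, B, hB 0, hB 1, hB 2⟩

private lemma abstract_orth {m : ℕ} {d : Fin m → ℕ} {K : ℕ}
    (F : Fin K → (i : Fin m) → OrthonormalBasis (Fin (d i)) ℂ (EuclideanSpace ℂ (Fin (d i))))
    (R : ((j : Fin m) → Fin (d j)) → Fin K)
    (cross : ∀ t s, R t < R s →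
      ∃ i, (inner ℂ ((F (R t) i) (t i)) ((F (R s) i) (s i)) : ℂ) = 0) :
    ∀ t s, t ≠ s → ∃ i, (inner ℂ ((F (R t) i) (t i)) ((F (R s) i) (s i)) : ℂ) = 0 := by
  intro t s hts
  rcases lt_trichotomy (R t) (R s) with h | h | h
  · exact cross t s h
  · have : ∃ i, t i ≠ s i := by
      by_contra hc
      push_neg at hc
      exact hts (funext hc)
    obtain ⟨i, hi⟩ := this
    refine ⟨i, ?_⟩
    rw [h]
    exact (F (R s) i).orthonormal.2 hi
  · obtain ⟨i, hi⟩ := cross s t h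
    exact ⟨i, inner_eq_zero_symm.mp hi⟩

private lemma package {m n : ℕ} {d : Fin m → ℕ}
    (φ : (i : Fin m) → Fin n → EuclideanSpace ℂ (Fin (d i)))
    (ext' : (i : Fin m) → ((j : Fin m) → Fin (d j)) → EuclideanSpace ℂ (Fin (d i)))
    (τ : Fin n → (j : Fin m) → Fin (d j)) (hτ : Function.Injective τ)
    (h1 : ∀ i t, ‖ext' i t‖ = 1)
    (h2 : ∀ t s, t ≠ s → ∃ i, (inner ℂ (ext' i t) (ext' i s) : ℂ) = 0)
    (h3 : ∀ j i, ext' i (τ j) = φ i j) :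
    ∃ (ext : (i : Fin m) → Fin (∏ i, d i) → EuclideanSpace ℂ (Fin (d i)))
      (e : Fin n ↪ Fin (∏ i, d i)),
      (∀ i t, ‖ext i t‖ = 1) ∧
      (∀ s t : Fin (∏ i, d i), s ≠ t → ∃ i, (inner ℂ (ext i s) (ext i t) : ℂ) = 0) ∧
      (∀ j i, ext i (e j) = φ i j) := by
  have hc : Fintype.card ((j : Fin m) → Fin (d j)) = ∏ i, d i := by simp
  let eqv := Fintype.equivFinOfCardEq hc
  refine ⟨fun i t => ext' i (eqv.symm t),
    ⟨fun j => eqv (τ j), fun x y h => hτ (eqv.injective h)⟩,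
    fun i t => h1 _ _,
    fun s t hst => h2 _ _ (fun hh => hst (by
      have := congrArg eqv hh
      simpa using this)),
    fun j i => by show ext' i (eqv.symm (eqv (τ j))) = φ i j; simp [h3]⟩

private lemma chain2 {m : ℕ} {d : Fin m → ℕ} (hd : ∀ i, 0 < d i)
    (u v : (i : Fin m) → EuclideanSpace ℂ (Fin (d i)))
    (hu : ∀ i, ‖u i‖ = 1) (hv : ∀ i, ‖v i‖ = 1) {a : Fin m}
    (huv : (inner ℂ (u a) (v a) : ℂ) = 0) :
    ∃ (ext' : (i : Fin m) → ((j : Fin m) → Fin (d j)) → EuclideanSpace ℂ (Fin (d i)))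
      (t0 t1 : (j : Fin m) → Fin (d j)),
      t0 ≠ t1 ∧
      (∀ i t, ‖ext' i t‖ = 1) ∧
      (∀ t s, t ≠ s → ∃ i, (inner ℂ (ext' i t) (ext' i s) : ℂ) = 0) ∧
      (∀ i, ext' i t0 = u i) ∧ (∀ i, ext' i t1 = v i) := by
  classical
  obtain ⟨h2a, g, hg0, hg1⟩ := extend2 (hu a) (hv a) huv
  choose B0 hB0 using fun i => extend1 (hu i)
  choose B1 hB1 using fun i => extend1 (hv i)
  set F : Fin 3 → (i : Fin m) → OrthonormalBasis (Fin (d i)) ℂ (EuclideanSpace ℂ (Fin (d i))) :=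
    ![Function.update B0 a g, Function.update B1 a g, Function.update B0 a g] with hF
  have hFa : ∀ k, F k a = g := by
    intro k
    fin_cases k <;> simp [hF]
  set R : ((j : Fin m) → Fin (d j)) → Fin 3 := fun t =>
    if (t a).1 = 0 then 0 else if (t a).1 = 1 then 1 else 2 with hR
  have hRval : ∀ t s, (t a).1 = (s a).1 → R t = R s := by
    intro t s h
    simp only [hR, h]
  have cross : ∀ t s, R t < R s →
      ∃ i, (inner ℂ ((F (R t) i) (t i)) ((F (R s) i) (s i)) : ℂ) = 0 := by
    intro t s hlt
    refine ⟨a, ?_⟩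
    rw [hFa (R t), hFa (R s)]
    refine g.orthonormal.2 (fun h => ?_)
    exact absurd (hRval t s (congrArg Fin.val h)) (ne_of_lt hlt)
  have horth := abstract_orth F R cross
  refine ⟨fun i t => F (R t) i (t i), fun i => ⟨0, hd i⟩,
    Function.update (fun i => ⟨0, hd i⟩) a ⟨1, by omega⟩, ?_, ?_, horth, ?_, ?_⟩
  · intro h
    have := congrFun h a
    rw [Function.update_self] at this
    exact absurd (congrArg Fin.val this) (by simp)
  · intro i t
    exact (F (R t) i).orthonormal.1 _
  · intro i
    have hRz : R (fun i => (⟨0, hd i⟩ : Fin (d i))) = 0 := by simp [hR]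
    simp only [hRz]
    by_cases hia : i = a
    · subst hia
      simp only [hF]
      simpa using hg0
    · simp only [hF]
      simpa [Function.update_of_ne hia] using hB0 i (hd i)
  · intro i
    have hRz : R (Function.update (fun i => (⟨0, hd i⟩ : Fin (d i))) a ⟨1, by omega⟩) = 1 := by
      simp [hR, Function.update_self]
    simp only [hRz]
    by_cases hia : i = a
    · subst hia
      simp only [hF]
      simpa [Function.update_self] using hg1
    · simp only [hF]
      simpa [Function.update_of_ne hia] using hB1 i (hd i)

private lemma chain3 {m : ℕ} {d : Fin m → ℕ} (hd : ∀ i, 0 < d i)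
    (u v w : (i : Fin m) → EuclideanSpace ℂ (Fin (d i)))
    (hu : ∀ i, ‖u i‖ = 1) (hv : ∀ i, ‖v i‖ = 1) (hw : ∀ i, ‖w i‖ = 1) {a : Fin m}
    (huv : (inner ℂ (u a) (v a) : ℂ) = 0) (huw : (inner ℂ (u a) (w a) : ℂ) = 0)
    (hvw : (inner ℂ (v a) (w a) : ℂ) = 0) :
    ∃ (ext' : (i : Fin m) → ((j : Fin m) → Fin (d j)) → EuclideanSpace ℂ (Fin (d i)))
      (t0 t1 t2 : (j : Fin m) → Fin (d j)),
      t0 ≠ t1 ∧ t0 ≠ t2 ∧ t1 ≠ t2 ∧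
      (∀ i t, ‖ext' i t‖ = 1) ∧
      (∀ t s, t ≠ s → ∃ i, (inner ℂ (ext' i t) (ext' i s) : ℂ) = 0) ∧
      (∀ i, ext' i t0 = u i) ∧ (∀ i, ext' i t1 = v i) ∧ (∀ i, ext' i t2 = w i) := by
  classical
  obtain ⟨h3a, g, hg0, hg1, hg2⟩ := extend3 (hu a) (hv a) (hw a) huv huw hvw
  choose B0 hB0 using fun i => extend1 (hu i)
  choose B1 hB1 using fun i => extend1 (hv i)
  choose B2 hB2 using fun i => extend1 (hw i)
  set F : Fin 4 → (i : Fin m) → OrthonormalBasis (Fin (d i)) ℂ (EuclideanSpace ℂ (Fin (d i))) :=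
    ![Function.update B0 a g, Function.update B1 a g, Function.update B2 a g,
      Function.update B0 a g] with hF
  have hFa : ∀ k, F k a = g := by
    intro k
    fin_cases k <;> simp [hF]
  set R : ((j : Fin m) → Fin (d j)) → Fin 4 := fun t =>
    if (t a).1 = 0 then 0 else if (t a).1 = 1 then 1 else if (t a).1 = 2 then 2 else 3 with hR
  have hRval : ∀ t s, (t a).1 = (s a).1 → R t = R s := by
    intro t s h
    simp only [hR, h]
  have cross : ∀ t s, R t < R s →
      ∃ i, (inner ℂ ((F (R t) i) (t i)) ((F (R s) i) (s i)) : ℂ) = 0 := by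
    intro t s hlt
    refine ⟨a, ?_⟩
    rw [hFa (R t), hFa (R s)]
    refine g.orthonormal.2 (fun h => ?_)
    exact absurd (hRval t s (congrArg Fin.val h)) (ne_of_lt hlt)
  have horth := abstract_orth F R cross
  refine ⟨fun i t => F (R t) i (t i), fun i => ⟨0, hd i⟩,
    Function.update (fun i => ⟨0, hd i⟩) a ⟨1, by omega⟩,
    Function.update (fun i => ⟨0, hd i⟩) a ⟨2, by omega⟩, ?_, ?_, ?_, ?_, horth, ?_, ?_, ?_⟩
  · intro h
    have := congrArg Fin.val (congrFun h a)
    rw [Function.update_self] at this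
    simp at this
  · intro h
    have := congrArg Fin.val (congrFun h a)
    rw [Function.update_self] at this
    simp at this
  · intro h
    have := congrArg Fin.val (congrFun h a)
    rw [Function.update_self, Function.update_self] at this
    simp at this
  · intro i t
    exact (F (R t) i).orthonormal.1 _
  · intro i
    have hRz : R (fun i => (⟨0, hd i⟩ : Fin (d i))) = 0 := by simp [hR]
    simp only [hRz]
    by_cases hia : i = a
    · subst hia
      simp only [hF]
      simpa using hg0
    · simp only [hF]
      simpa [Function.update_of_ne hia] using hB0 i (hd i)
  · intro i
    have hRz : R (Function.update (fun i => (⟨0, hd i⟩ : Fin (d i))) a ⟨1, by omega⟩) = 1 := by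
      simp [hR, Function.update_self]
    simp only [hRz]
    by_cases hia : i = a
    · subst hia
      simp only [hF]
      simpa [Function.update_self] using hg1
    · simp only [hF]
      simpa [Function.update_of_ne hia] using hB1 i (hd i)
  · intro i
    have hRz : R (Function.update (fun i => (⟨0, hd i⟩ : Fin (d i))) a ⟨2, by omega⟩) = 2 := by
      simp [hR, Function.update_self]
    simp only [hRz]
    by_cases hia : i = a
    · subst hia
      simp only [hF]
      simpa [Function.update_self] using hg2
    · simp only [hF]
      simpa [Function.update_of_ne hia] using hB2 i (hd i)

private lemma hub {m : ℕ} {d : Fin m → ℕ} (hd : ∀ i, 0 < d i)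
    (u v w : (i : Fin m) → EuclideanSpace ℂ (Fin (d i)))
    (hu : ∀ i, ‖u i‖ = 1) (hv : ∀ i, ‖v i‖ = 1) (hw : ∀ i, ‖w i‖ = 1) {a c : Fin m}
    (hac : a ≠ c)
    (huv : (inner ℂ (u a) (v a) : ℂ) = 0) (huw : (inner ℂ (u a) (w a) : ℂ) = 0)
    (hvw : (inner ℂ (v c) (w c) : ℂ) = 0) :
    ∃ (ext' : (i : Fin m) → ((j : Fin m) → Fin (d j)) → EuclideanSpace ℂ (Fin (d i)))
      (t0 t1 t2 : (j : Fin m) → Fin (d j)),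
      t0 ≠ t1 ∧ t0 ≠ t2 ∧ t1 ≠ t2 ∧
      (∀ i t, ‖ext' i t‖ = 1) ∧
      (∀ t s, t ≠ s → ∃ i, (inner ℂ (ext' i t) (ext' i s) : ℂ) = 0) ∧
      (∀ i, ext' i t0 = u i) ∧ (∀ i, ext' i t1 = v i) ∧ (∀ i, ext' i t2 = w i) := by
  classical
  obtain ⟨h2a, g, hg0, hg1⟩ := extend2 (hu a) (hv a) huv
  obtain ⟨_, p, hp0, hp1⟩ := extend2 (hu a) (hw a) huw
  obtain ⟨h2c, r, hr0, hr1⟩ := extend2 (hv c) (hw c) hvw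
  choose Bh hBh using fun i => extend1 (hu i)
  choose Bx hBx using fun i => extend1 (hv i)
  choose By hBy using fun i => extend1 (hw i)
  set F : Fin 4 → (i : Fin m) → OrthonormalBasis (Fin (d i)) ℂ (EuclideanSpace ℂ (Fin (d i))) :=
    ![Function.update Bh a g,
      Function.update (Function.update Bx a g) c r,
      Function.update (Function.update By a p) c r,
      Function.update (Function.update Bh a g) c r] with hF
  have e0a : F 0 a = g := by simp [hF]
  have e1a : F 1 a = g := by simp [hF, Function.update_of_ne hac]
  have e2a : F 2 a = p := by simp [hF, Function.update_of_ne hac]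
  have e3a : F 3 a = g := by simp [hF, Function.update_of_ne hac]
  have e1c : F 1 c = r := by simp [hF]
  have e2c : F 2 c = r := by simp [hF]
  have e3c : F 3 c = r := by simp [hF]
  set R : ((j : Fin m) → Fin (d j)) → Fin 4 := fun t =>
    if (t a).1 = 0 then 0 else if (t c).1 = 0 then 1 else if (t c).1 = 1 then 2 else 3 with hR
  have Rspec : ∀ t, (R t = 0 ∧ (t a).1 = 0) ∨
      (R t = 1 ∧ (t a).1 ≠ 0 ∧ (t c).1 = 0) ∨
      (R t = 2 ∧ (t a).1 ≠ 0 ∧ (t c).1 = 1) ∨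
      (R t = 3 ∧ (t a).1 ≠ 0 ∧ (t c).1 ≠ 0 ∧ (t c).1 ≠ 1) := by
    intro t
    simp only [hR]
    split_ifs with h1 h2 h3
    · exact Or.inl ⟨rfl, h1⟩
    · exact Or.inr (Or.inl ⟨rfl, h1, h2⟩)
    · exact Or.inr (Or.inr (Or.inl ⟨rfl, h1, h3⟩))
    · exact Or.inr (Or.inr (Or.inr ⟨rfl, h1, h2, h3⟩))
  have cross : ∀ t s, R t < R s →
      ∃ i, (inner ℂ ((F (R t) i) (t i)) ((F (R s) i) (s i)) : ℂ) = 0 := by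
    intro t s hlt
    rcases Rspec t with ⟨ht, hta⟩ | ⟨ht, hta, htc⟩ | ⟨ht, hta, htc⟩ | ⟨ht, hta, htc1, htc2⟩ <;>
      rcases Rspec s with ⟨hs, hsa⟩ | ⟨hs, hsa, hsc⟩ | ⟨hs, hsa, hsc⟩ | ⟨hs, hsa, hsc1, hsc2⟩ <;>
      rw [ht, hs] at hlt ⊢ <;>
      (try exact absurd hlt (by decide))
    · -- (0,1) via a
      refine ⟨a, ?_⟩
      rw [e0a, e1a]
      exact g.orthonormal.2 (Fin.ne_of_val_ne (by omega))
    · -- (0,2) via a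
      refine ⟨a, ?_⟩
      rw [e0a, e2a]
      have h1 : t a = ⟨0, hd a⟩ := Fin.ext hta
      have h2 : g (⟨0, hd a⟩ : Fin (d a)) = p ⟨0, hd a⟩ := hg0.trans hp0.symm
      rw [h1, h2]
      exact p.orthonormal.2 (Fin.ne_of_val_ne (by simpa using fun hh => hsa hh.symm))
    · -- (0,3) via a
      refine ⟨a, ?_⟩
      rw [e0a, e3a]
      exact g.orthonormal.2 (Fin.ne_of_val_ne (by omega))
    · -- (1,2) via c
      refine ⟨c, ?_⟩
      rw [e1c, e2c]
      exact r.orthonormal.2 (Fin.ne_of_val_ne (by omega))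
    · -- (1,3) via c
      refine ⟨c, ?_⟩
      rw [e1c, e3c]
      exact r.orthonormal.2 (Fin.ne_of_val_ne (by omega))
    · -- (2,3) via c
      refine ⟨c, ?_⟩
      rw [e2c, e3c]
      exact r.orthonormal.2 (Fin.ne_of_val_ne (by omega))
  have horth := abstract_orth F R cross
  set z : (j : Fin m) → Fin (d j) := fun i => ⟨0, hd i⟩ with hz
  set t1 : (j : Fin m) → Fin (d j) := Function.update z a ⟨1, by omega⟩ with ht1
  set t2 : (j : Fin m) → Fin (d j) :=
    Function.update (Function.update z a ⟨1, by omega⟩) c ⟨1, by omega⟩ with ht2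
  have ht1a : t1 a = ⟨1, by omega⟩ := by simp [ht1]
  have ht1c : t1 c = ⟨0, hd c⟩ := by simp [ht1, hz, Function.update_of_ne (Ne.symm hac)]
  have ht2a : t2 a = ⟨1, by omega⟩ := by
    simp [ht2, Function.update_of_ne hac]
  have ht2c : t2 c = ⟨1, by omega⟩ := by simp [ht2]
  have hRz : R z = 0 := by simp [hR, hz]
  have hRt1 : R t1 = 1 := by simp [hR, ht1a, ht1c]
  have hRt2 : R t2 = 2 := by simp [hR, ht2a, ht2c]
  refine ⟨fun i t => F (R t) i (t i), z, t1, t2, ?_, ?_, ?_, ?_, horth, ?_, ?_, ?_⟩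
  · intro h
    have := congrArg Fin.val (congrFun h a)
    rw [ht1a] at this
    simp [hz] at this
  · intro h
    have := congrArg Fin.val (congrFun h c)
    rw [ht2c] at this
    simp [hz] at this
  · intro h
    have := congrArg Fin.val (congrFun h c)
    rw [ht1c, ht2c] at this
    simp at this
  · intro i t
    exact (F (R t) i).orthonormal.1 _
  · intro i
    simp only [hRz]
    by_cases hia : i = a
    · subst hia
      rw [e0a]
      simpa [hz] using hg0
    · have : F 0 i = Bh i := by simp [hF, Function.update_of_ne hia]
      rw [this]
      simpa [hz] using hBh i (hd i)
  · intro i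
    simp only [hRt1]
    by_cases hia : i = a
    · subst hia
      rw [e1a, ht1a]
      simpa using hg1
    · by_cases hic : i = c
      · subst hic
        rw [e1c, ht1c]
        simpa using hr0
      · have : F 1 i = Bx i := by
          simp [hF, Function.update_of_ne hia, Function.update_of_ne hic]
        rw [this]
        have : t1 i = ⟨0, hd i⟩ := by simp [ht1, hz, Function.update_of_ne hia]
        rw [this]
        simpa using hBx i (hd i)
  · intro i
    simp only [hRt2]
    by_cases hia : i = a
    · subst hia
      rw [e2a, ht2a]
      simpa using hp1
    · by_cases hic : i = c
      · subst hic
        rw [e2c, ht2c]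
        simpa using hr1
      · have : F 2 i = By i := by
          simp [hF, Function.update_of_ne hia, Function.update_of_ne hic]
        rw [this]
        have : t2 i = ⟨0, hd i⟩ := by
          simp [ht2, hz, Function.update_of_ne hia, Function.update_of_ne hic]
        rw [this]
        simpa using hBy i (hd i)

private lemma case5 {m : ℕ} {d : Fin m → ℕ} (hd : ∀ i, 0 < d i)
    (u v w : (i : Fin m) → EuclideanSpace ℂ (Fin (d i)))
    (hu : ∀ i, ‖u i‖ = 1) (hv : ∀ i, ‖v i‖ = 1) (hw : ∀ i, ‖w i‖ = 1) {a b c : Fin m}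
    (hab : a ≠ b) (hac : a ≠ c) (hbc : b ≠ c)
    (huv : (inner ℂ (u a) (v a) : ℂ) = 0) (huw : (inner ℂ (u b) (w b) : ℂ) = 0)
    (hvw : (inner ℂ (v c) (w c) : ℂ) = 0) :
    ∃ (ext' : (i : Fin m) → ((j : Fin m) → Fin (d j)) → EuclideanSpace ℂ (Fin (d i)))
      (t0 t1 t2 : (j : Fin m) → Fin (d j)),
      t0 ≠ t1 ∧ t0 ≠ t2 ∧ t1 ≠ t2 ∧
      (∀ i t, ‖ext' i t‖ = 1) ∧
      (∀ t s, t ≠ s → ∃ i, (inner ℂ (ext' i t) (ext' i s) : ℂ) = 0) ∧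
      (∀ i, ext' i t0 = u i) ∧ (∀ i, ext' i t1 = v i) ∧ (∀ i, ext' i t2 = w i) := by
  classical
  obtain ⟨h2a, g, hg0, hg1⟩ := extend2 (hu a) (hv a) huv
  obtain ⟨h2b, q, hq0, hq1⟩ := extend2 (hu b) (hw b) huw
  obtain ⟨h2c, r, hr0, hr1⟩ := extend2 (hv c) (hw c) hvw
  choose B0 hB0 using fun i => extend1 (hu i)
  choose B1 hB1 using fun i => extend1 (hv i)
  choose B2 hB2 using fun i => extend1 (hw i)
  set F : Fin 4 → (i : Fin m) → OrthonormalBasis (Fin (d i)) ℂ (EuclideanSpace ℂ (Fin (d i))) :=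
    ![Function.update (Function.update B0 a g) b q,
      Function.update (Function.update B1 a g) c r,
      Function.update (Function.update B2 b q) c r,
      Function.update (Function.update (Function.update B0 a g) b q) c r] with hF
  have e0a : F 0 a = g := by simp [hF, Function.update_of_ne hab]
  have e1a : F 1 a = g := by simp [hF, Function.update_of_ne hac]
  have e3a : F 3 a = g := by
    simp [hF, Function.update_of_ne hab, Function.update_of_ne hac]
  have e0b : F 0 b = q := by simp [hF]
  have e2b : F 2 b = q := by simp [hF, Function.update_of_ne hbc]
  have e3b : F 3 b = q := by simp [hF, Function.update_of_ne hbc]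
  have e1c : F 1 c = r := by simp [hF]
  have e2c : F 2 c = r := by simp [hF]
  have e3c : F 3 c = r := by simp [hF]
  set R : ((j : Fin m) → Fin (d j)) → Fin 4 := fun t =>
    if (t a).1 = 0 ∧ (t b).1 = 0 then 0
    else if (t a).1 = 1 ∧ (t c).1 = 0 then 1
    else if (t b).1 = 1 ∧ (t c).1 = 1 then 2 else 3 with hR
  have Rspec : ∀ t,
      (R t = 0 ∧ ((t a).1 = 0 ∧ (t b).1 = 0)) ∨
      (R t = 1 ∧ ¬((t a).1 = 0 ∧ (t b).1 = 0) ∧ ((t a).1 = 1 ∧ (t c).1 = 0)) ∨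
      (R t = 2 ∧ ¬((t a).1 = 0 ∧ (t b).1 = 0) ∧ ¬((t a).1 = 1 ∧ (t c).1 = 0) ∧
        ((t b).1 = 1 ∧ (t c).1 = 1)) ∨
      (R t = 3 ∧ ¬((t a).1 = 0 ∧ (t b).1 = 0) ∧ ¬((t a).1 = 1 ∧ (t c).1 = 0) ∧
        ¬((t b).1 = 1 ∧ (t c).1 = 1)) := by
    intro t
    simp only [hR]
    split_ifs with h1 h2 h3
    · exact Or.inl ⟨rfl, h1⟩
    · exact Or.inr (Or.inl ⟨rfl, h1, h2⟩)
    · exact Or.inr (Or.inr (Or.inl ⟨rfl, h1, h2, h3⟩))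
    · exact Or.inr (Or.inr (Or.inr ⟨rfl, h1, h2, h3⟩))
  have cross : ∀ t s, R t < R s →
      ∃ i, (inner ℂ ((F (R t) i) (t i)) ((F (R s) i) (s i)) : ℂ) = 0 := by
    intro t s hlt
    rcases Rspec t with ⟨ht, hta, htb⟩ | ⟨ht, -, hta, htc⟩ | ⟨ht, -, -, htb, htc⟩ |
        ⟨ht, ht0, ht1, ht2⟩ <;>
      rcases Rspec s with ⟨hs, hsa, hsb⟩ | ⟨hs, -, hsa, hsc⟩ | ⟨hs, -, -, hsb, hsc⟩ |
        ⟨hs, hs0, hs1, hs2⟩ <;>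
      rw [ht, hs] at hlt ⊢ <;>
      (try exact absurd hlt (by decide))
    · -- (0,1) via a
      refine ⟨a, ?_⟩
      rw [e0a, e1a]
      exact g.orthonormal.2 (Fin.ne_of_val_ne (by omega))
    · -- (0,2) via b
      refine ⟨b, ?_⟩
      rw [e0b, e2b]
      exact q.orthonormal.2 (Fin.ne_of_val_ne (by omega))
    · -- (0,3) via a or b
      rcases not_and_or.mp hs0 with h | h
      · refine ⟨a, ?_⟩
        rw [e0a, e3a]
        exact g.orthonormal.2 (Fin.ne_of_val_ne (by omega))
      · refine ⟨b, ?_⟩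
        rw [e0b, e3b]
        exact q.orthonormal.2 (Fin.ne_of_val_ne (by omega))
    · -- (1,2) via c
      refine ⟨c, ?_⟩
      rw [e1c, e2c]
      exact r.orthonormal.2 (Fin.ne_of_val_ne (by omega))
    · -- (1,3) via a or c
      rcases not_and_or.mp hs1 with h | h
      · refine ⟨a, ?_⟩
        rw [e1a, e3a]
        exact g.orthonormal.2 (Fin.ne_of_val_ne (by omega))
      · refine ⟨c, ?_⟩
        rw [e1c, e3c]
        exact r.orthonormal.2 (Fin.ne_of_val_ne (by omega))
    · -- (2,3) via b or c
      rcases not_and_or.mp hs2 with h | h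
      · refine ⟨b, ?_⟩
        rw [e2b, e3b]
        exact q.orthonormal.2 (Fin.ne_of_val_ne (by omega))
      · refine ⟨c, ?_⟩
        rw [e2c, e3c]
        exact r.orthonormal.2 (Fin.ne_of_val_ne (by omega))
  have horth := abstract_orth F R cross
  set z : (j : Fin m) → Fin (d j) := fun i => ⟨0, hd i⟩ with hz
  set t1 : (j : Fin m) → Fin (d j) := Function.update z a ⟨1, by omega⟩ with ht1
  set t2 : (j : Fin m) → Fin (d j) :=
    Function.update (Function.update z b ⟨1, by omega⟩) c ⟨1, by omega⟩ with ht2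
  have ht1a : t1 a = ⟨1, by omega⟩ := by simp [ht1]
  have ht1b : t1 b = ⟨0, hd b⟩ := by simp [ht1, hz, Function.update_of_ne (Ne.symm hab)]
  have ht1c : t1 c = ⟨0, hd c⟩ := by simp [ht1, hz, Function.update_of_ne (Ne.symm hac)]
  have ht2a : t2 a = ⟨0, hd a⟩ := by
    simp [ht2, hz, Function.update_of_ne hac, Function.update_of_ne hab]
  have ht2b : t2 b = ⟨1, by omega⟩ := by simp [ht2, Function.update_of_ne hbc]
  have ht2c : t2 c = ⟨1, by omega⟩ := by simp [ht2]
  have hRz : R z = 0 := by simp [hR, hz]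
  have hRt1 : R t1 = 1 := by simp [hR, ht1a, ht1c]
  have hRt2 : R t2 = 2 := by simp [hR, ht2a, ht2b, ht2c]
  refine ⟨fun i t => F (R t) i (t i), z, t1, t2, ?_, ?_, ?_, ?_, horth, ?_, ?_, ?_⟩
  · intro h
    have := congrArg Fin.val (congrFun h a)
    rw [ht1a] at this
    simp [hz] at this
  · intro h
    have := congrArg Fin.val (congrFun h b)
    rw [ht2b] at this
    simp [hz] at this
  · intro h
    have := congrArg Fin.val (congrFun h a)
    rw [ht1a, ht2a] at this
    simp at this
  · intro i t
    exact (F (R t) i).orthonormal.1 _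
  · intro i
    simp only [hRz]
    by_cases hia : i = a
    · subst hia
      rw [e0a]
      simpa [hz] using hg0
    · by_cases hib : i = b
      · subst hib
        rw [e0b]
        simpa [hz] using hq0
      · have : F 0 i = B0 i := by
          simp [hF, Function.update_of_ne hia, Function.update_of_ne hib]
        rw [this]
        simpa [hz] using hB0 i (hd i)
  · intro i
    simp only [hRt1]
    by_cases hia : i = a
    · subst hia
      rw [e1a, ht1a]
      simpa using hg1
    · by_cases hic : i = c
      · subst hic
        rw [e1c, ht1c]
        simpa using hr0
      · have hFi : F 1 i = B1 i := by
          simp [hF, Function.update_of_ne hia, Function.update_of_ne hic]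
        have hti : t1 i = ⟨0, hd i⟩ := by simp [ht1, hz, Function.update_of_ne hia]
        rw [hFi, hti]
        simpa using hB1 i (hd i)
  · intro i
    simp only [hRt2]
    by_cases hib : i = b
    · subst hib
      rw [e2b, ht2b]
      simpa using hq1
    · by_cases hic : i = c
      · subst hic
        rw [e2c, ht2c]
        simpa using hr1
      · have hFi : F 2 i = B2 i := by
          simp [hF, Function.update_of_ne hib, Function.update_of_ne hic]
        have hti : t2 i = ⟨0, hd i⟩ := by
          simp [ht2, hz, Function.update_of_ne hib, Function.update_of_ne hic]
        rw [hFi, hti]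
        simpa using hB2 i (hd i)

private lemma inj2 {α : Type*} {x y : α} (h1 : x ≠ y) : Function.Injective ![x, y] := by
  intro i j hij
  fin_cases i <;> fin_cases j <;> simp_all

private lemma inj3 {α : Type*} {x y z : α} (h1 : x ≠ y) (h2 : x ≠ z) (h3 : y ≠ z) :
    Function.Injective ![x, y, z] := by
  intro i j hij
  fin_cases i <;> fin_cases j <;> simp_all

/-- Any set of at most 3 mutually orthogonal product vectors (with unit factors)
in a multipartite space ⊗_{i} ℂ^{d_i} can be completed to a full orthogonal
product basis of the whole space: there is a family of D = ∏_i d_i unit product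
vectors, pairwise orthogonal (some factor inner ℂ product vanishes), which
contains the given set. -/
theorem stmt8 (m n : ℕ) (d : Fin m → ℕ) (hn : n ≤ 3)
    (φ : (i : Fin m) → Fin n → EuclideanSpace ℂ (Fin (d i)))
    (hunit : ∀ i j, ‖φ i j‖ = 1)
    (horth : ∀ j k : Fin n, j ≠ k → ∃ i, (inner ℂ (φ i j) (φ i k) : ℂ) = 0) :
    ∃ (ext : (i : Fin m) → Fin (∏ i, d i) → EuclideanSpace ℂ (Fin (d i)))
      (e : Fin n ↪ Fin (∏ i, d i)),
      (∀ i t, ‖ext i t‖ = 1) ∧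
      (∀ s t : Fin (∏ i, d i), s ≠ t → ∃ i, (inner ℂ (ext i s) (ext i t) : ℂ) = 0) ∧
      (∀ j i, ext i (e j) = φ i j) := by
  classical
  by_cases hd : ∀ i, 0 < d i
  · -- all local dimensions positive
    interval_cases n
    · -- n = 0
      refine package φ (fun i t => EuclideanSpace.basisFun (Fin (d i)) ℂ (t i)) Fin.elim0
        (fun x => x.elim0) (fun i t => (EuclideanSpace.basisFun (Fin (d i)) ℂ).orthonormal.1 _)
        ?_ (fun j => j.elim0)
      intro t s hts
      have : ∃ i, t i ≠ s i := by
        by_contra hc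
        push_neg at hc
        exact hts (funext hc)
      obtain ⟨i, hi⟩ := this
      exact ⟨i, (EuclideanSpace.basisFun (Fin (d i)) ℂ).orthonormal.2 hi⟩
    · -- n = 1
      choose B hB using fun i => extend1 (hunit i 0)
      refine package φ (fun i t => B i (t i)) (fun _ i => ⟨0, hd i⟩)
        (fun x y _ => Subsingleton.elim x y) (fun i t => (B i).orthonormal.1 _) ?_ ?_
      · intro t s hts
        have : ∃ i, t i ≠ s i := by
          by_contra hc
          push_neg at hc
          exact hts (funext hc)
        obtain ⟨i, hi⟩ := this
        exact ⟨i, (B i).orthonormal.2 hi⟩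
      · intro j i
        have : j = 0 := Subsingleton.elim j 0
        subst this
        simpa using hB i (hd i)
    · -- n = 2
      obtain ⟨a, ha⟩ := horth 0 1 (by decide)
      obtain ⟨ext', t0, t1, hne, h1, h2, h30, h31⟩ :=
        chain2 hd (fun i => φ i 0) (fun i => φ i 1) (fun i => hunit i 0) (fun i => hunit i 1) ha
      refine package φ ext' ![t0, t1] (inj2 hne) h1 h2 ?_
      intro j i
      fin_cases j
      · simpa using h30 i
      · simpa using h31 i
    · -- n = 3
      obtain ⟨a, ha⟩ := horth 0 1 (by decide)
      obtain ⟨b, hb⟩ := horth 0 2 (by decide)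
      obtain ⟨c, hc⟩ := horth 1 2 (by decide)
      by_cases hab : a = b
      · subst hab
        by_cases hac : a = c
        · subst hac
          obtain ⟨ext', t0, t1, t2, hne01, hne02, hne12, h1, h2, h30, h31, h32⟩ :=
            chain3 hd (fun i => φ i 0) (fun i => φ i 1) (fun i => φ i 2)
              (fun i => hunit i 0) (fun i => hunit i 1) (fun i => hunit i 2) ha hb hc
          refine package φ ext' ![t0, t1, t2] (inj3 hne01 hne02 hne12) h1 h2 ?_
          intro j i
          fin_cases j
          · simpa using h30 i
          · simpa using h31 i
          · simpa using h32 i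
        · obtain ⟨ext', t0, t1, t2, hne01, hne02, hne12, h1, h2, h30, h31, h32⟩ :=
            hub hd (fun i => φ i 0) (fun i => φ i 1) (fun i => φ i 2)
              (fun i => hunit i 0) (fun i => hunit i 1) (fun i => hunit i 2) hac ha hb hc
          refine package φ ext' ![t0, t1, t2] (inj3 hne01 hne02 hne12) h1 h2 ?_
          intro j i
          fin_cases j
          · simpa using h30 i
          · simpa using h31 i
          · simpa using h32 i
      · by_cases hac : a = c
        · subst hac
          obtain ⟨ext', t0, t1, t2, hne01, hne02, hne12, h1, h2, h30, h31, h32⟩ :=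
            hub hd (fun i => φ i 1) (fun i => φ i 0) (fun i => φ i 2)
              (fun i => hunit i 1) (fun i => hunit i 0) (fun i => hunit i 2) hab
              (inner_eq_zero_symm.mp ha) hc hb
          refine package φ ext' ![t1, t0, t2] (inj3 (Ne.symm hne01) hne12 hne02) h1 h2 ?_
          intro j i
          fin_cases j
          · simpa using h31 i
          · simpa using h30 i
          · simpa using h32 i
        · by_cases hbc : b = c
          · subst hbc
            obtain ⟨ext', t0, t1, t2, hne01, hne02, hne12, h1, h2, h30, h31, h32⟩ :=
              hub hd (fun i => φ i 2) (fun i => φ i 0) (fun i => φ i 1)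
                (fun i => hunit i 2) (fun i => hunit i 0) (fun i => hunit i 1) (Ne.symm hab)
                (inner_eq_zero_symm.mp hb) (inner_eq_zero_symm.mp hc) ha
            refine package φ ext' ![t1, t2, t0] (inj3 hne12 (Ne.symm hne01) (Ne.symm hne02))
              h1 h2 ?_
            intro j i
            fin_cases j
            · simpa using h31 i
            · simpa using h32 i
            · simpa using h30 i
          · obtain ⟨ext', t0, t1, t2, hne01, hne02, hne12, h1, h2, h30, h31, h32⟩ :=
              case5 hd (fun i => φ i 0) (fun i => φ i 1) (fun i => φ i 2)
                (fun i => hunit i 0) (fun i => hunit i 1) (fun i => hunit i 2) hab hac hbc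
                ha hb hc
            refine package φ ext' ![t0, t1, t2] (inj3 hne01 hne02 hne12) h1 h2 ?_
            intro j i
            fin_cases j
            · simpa using h30 i
            · simpa using h31 i
            · simpa using h32 i
  · -- some local dimension is zero
    push_neg at hd
    obtain ⟨i0, hi0⟩ := hd
    have hzero : d i0 = 0 := by omega
    rcases n with - | n'
    · have hD : ∏ i, d i = 0 := Finset.prod_eq_zero (Finset.mem_univ i0) hzero
      refine ⟨fun i t => 0, ⟨Fin.elim0, fun x => x.elim0⟩, ?_, ?_, fun j => j.elim0⟩
      · intro i t
        exfalso
        have h := t.2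
        omega
      · intro s t hst
        exfalso
        have h := s.2
        omega
    · exfalso
      have hφ : φ i0 0 = 0 := by
        ext x
        exact absurd x.2 (by omega)
      have := hunit i0 0
      rw [hφ] at this
      simp at this
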